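/- Let n_1,…,n_d ≥ 3 and r ≥ 1, with 4 | gcd(n_1,…,n_d). The Hamming graph H(n_1,…,n_d,2,…,2) (with r twos), whose adjacency matrix is B = Σ_{i=1}^d I ⊗ ⋯ ⊗ A_{K_{n_i}} ⊗ ⋯ ⊗ I + Σ_{j=1}^r I ⊗ ⋯ ⊗ A_{K_2} ⊗ ⋯ ⊗ I (Cartesian product of complete graphs), admits perfect state transfer at time π/2 from every vertex u = (u_1,…,u_d,u_{d+1},…,u_{d+r}) to u + (0,…,0,1,…,1): specifically exp(-i(π/2)B) = γ · I_{n_1⋯n_d} ⊗ (A_{K_2} ⊗ ⋯ ⊗ A_{K_2}) for some unimodular constant γ ∈ ℂ. -/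

import Mathlib

open Kronecker

/-- Adjacency matrix of the complete graph `K_n`, as a complex matrix. -/
noncomputable def Kadj (n : ℕ) : Matrix (Fin n) (Fin n) ℂ :=
  Matrix.of fun i j => if i = j then 0 else 1

/-- Adjacency matrix of `K_2`, indexed by `ZMod 2`. -/
noncomputable def A2 : Matrix (ZMod 2) (ZMod 2) ℂ :=
  Matrix.of fun i j => if i = j then 0 else 1

/-- Kronecker product of a family of matrices. -/
noncomputable def kronC {d : ℕ} {n : Fin d → ℕ}
    (M : ∀ i, Matrix (Fin (n i)) (Fin (n i)) ℂ) :
    Matrix (∀ i, Fin (n i)) (∀ i, Fin (n i)) ℂ :=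
  Matrix.of fun u v => ∏ i, M i (u i) (v i)

/-- `M_a = A_{K_2}^{a_1} ⊗ ⋯ ⊗ A_{K_2}^{a_r}` for `a ∈ (ℤ/2)^r`. -/
noncomputable def cube {r : ℕ} (a : Fin r → ZMod 2) :
    Matrix (Fin r → ZMod 2) (Fin r → ZMod 2) ℂ :=
  Matrix.of fun u v => ∏ j, (if a j = 1 then A2 else 1) (u j) (v j)

/-- `A_{K_{n_1}}^{a_1} ⊗ ⋯ ⊗ A_{K_{n_d}}^{a_d}`. -/
noncomputable def compKron {d : ℕ} (n : Fin d → ℕ) (a : Fin d → ZMod 2) :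
    Matrix (∀ i, Fin (n i)) (∀ i, Fin (n i)) ℂ :=
  kronC fun i => if a i = 1 then Kadj (n i) else 1

/-- Hamming weight. -/
def wt {m : ℕ} (a : Fin m → ZMod 2) : ℕ :=
  (Finset.univ.filter fun i => a i = 1).card


open NormedSpace Matrix

variable {m : Type*} [Fintype m] [DecidableEq m]

lemma exp_prod_eq (a b : ℂ) :
    NormedSpace.exp ((a, b) : ℂ × ℂ) = (Complex.exp a, Complex.exp b) := by
  have h1 := map_exp (RingHom.fst ℂ ℂ) continuous_fst ((a, b) : ℂ × ℂ)
  have h2 := map_exp (RingHom.snd ℂ ℂ) continuous_snd ((a, b) : ℂ × ℂ)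
  simp only [RingHom.coe_fst, RingHom.coe_snd] at h1 h2
  rw [Complex.exp_eq_exp_ℂ]
  exact Prod.ext (by rw [h1]) (by rw [h2])

lemma exp_smul_idem (P : Matrix m m ℂ) (hP : P * P = P) (c : ℂ) :
    NormedSpace.exp (c • P) = 1 + (Complex.exp c - 1) • P := by
  letI : SeminormedRing (Matrix m m ℂ) := Matrix.linftyOpSemiNormedRing
  letI : NormedRing (Matrix m m ℂ) := Matrix.linftyOpNormedRing
  letI : NormedAlgebra ℂ (Matrix m m ℂ) := Matrix.linftyOpNormedAlgebra
  set Q : Matrix m m ℂ := 1 - P with hQ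
  have hQQ : Q * Q = Q := by
    simp only [hQ, sub_mul, mul_sub, one_mul, mul_one, hP]; abel
  have hQP : Q * P = 0 := by simp [hQ, sub_mul, one_mul, hP]
  have hPQ : P * Q = 0 := by simp [hQ, mul_sub, mul_one, hP]
  let φ : (ℂ × ℂ) →ₐ[ℂ] Matrix m m ℂ :=
  { toFun := fun p => p.1 • Q + p.2 • P
    map_one' := by
      show (1 : ℂ) • Q + (1 : ℂ) • P = 1
      rw [one_smul, one_smul, hQ]; abel
    map_mul' := by
      rintro ⟨a, b⟩ ⟨a', b'⟩
      show (a * a') • Q + (b * b') • P =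
        (a • Q + b • P) * (a' • Q + b' • P)
      rw [mul_add, add_mul, add_mul, smul_mul_smul_comm, smul_mul_smul_comm,
        smul_mul_smul_comm, smul_mul_smul_comm, hQQ, hQP, hPQ, hP,
        smul_zero, smul_zero]
      abel
    map_zero' := by
      show (0 : ℂ) • Q + (0 : ℂ) • P = 0
      simp
    map_add' := by
      rintro ⟨a, b⟩ ⟨a', b'⟩
      show (a + a') • Q + (b + b') • P = (a • Q + b • P) + (a' • Q + b' • P)
      rw [add_smul, add_smul]; abel
    commutes' := by
      intro c
      show c • Q + c • P = algebraMap ℂ (Matrix m m ℂ) c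
      rw [Algebra.algebraMap_eq_smul_one, ← smul_add, hQ]
      congr 1; abel }
  have hφ : Continuous φ := by
    show Continuous fun p : ℂ × ℂ => p.1 • Q + p.2 • P
    exact (continuous_fst.smul continuous_const).add
      (continuous_snd.smul continuous_const)
  have key := map_exp φ hφ ((0, c) : ℂ × ℂ)
  rw [exp_prod_eq, Complex.exp_zero] at key
  have h0 : φ ((0 : ℂ), c) = c • P := by
    show (0 : ℂ) • Q + c • P = c • P
    rw [zero_smul, zero_add]
  have h1 : φ ((1 : ℂ), Complex.exp c) = 1 + (Complex.exp c - 1) • P := by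
    show (1 : ℂ) • Q + Complex.exp c • P = 1 + (Complex.exp c - 1) • P
    rw [one_smul, hQ, sub_smul, one_smul]
    abel
  rw [h0] at key
  rw [← h1]
  exact key.symm

open NormedSpace Matrix

noncomputable def pstZ : ℂ := -Complex.I * ((Real.pi / 2 : ℝ) : ℂ)

lemma exp_neg_pstZ : Complex.exp (-pstZ) = Complex.I := by
  have : -pstZ = ((Real.pi / 2 : ℝ) : ℂ) * Complex.I := by
    unfold pstZ; ring
  rw [this, Complex.exp_mul_I]
  rw [← Complex.ofReal_cos, ← Complex.ofReal_sin]
  simp [Real.cos_pi_div_two, Real.sin_pi_div_two]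

lemma exp_pstZ : Complex.exp pstZ = -Complex.I := by
  have h := exp_neg_pstZ
  rw [Complex.exp_neg, inv_eq_iff_eq_inv, Complex.inv_I] at h
  exact h

lemma exp_two_pstZ : Complex.exp (2 * pstZ) = -1 := by
  rw [two_mul, Complex.exp_add, exp_pstZ]
  simp [Complex.I_mul_I]

lemma exp_pstZ_nat (N : ℕ) (h4 : 4 ∣ N) : Complex.exp (pstZ * N) = 1 := by
  obtain ⟨k, rfl⟩ := h4
  have : pstZ * ((4 * k : ℕ) : ℂ) = (-(k : ℤ)) * (2 * Real.pi * Complex.I) := by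
    unfold pstZ; push_cast; ring
  rw [this]
  exact_mod_cast Complex.exp_int_mul_two_pi_mul_I (-(k:ℤ))

lemma exp_scalar (c : ℂ) :
    NormedSpace.exp (c • (1 : Matrix m m ℂ)) = Complex.exp c • 1 := by
  rw [exp_smul_idem (1 : Matrix m m ℂ) (one_mul 1) c, sub_smul, one_smul]
  abel

lemma exp_K (X : Matrix m m ℂ) (N : ℕ) (hN : (N : ℂ) ≠ 0)
    (hsq : X * X = ((N : ℂ) - 2) • X + ((N : ℂ) - 1) • 1)
    (h4 : Complex.exp (pstZ * N) = 1) :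
    NormedSpace.exp (pstZ • X) = Complex.I • 1 := by
  set P : Matrix m m ℂ := ((N : ℂ))⁻¹ • (X + 1) with hPdef
  have hXX : (X + 1) * (X + 1) = (N : ℂ) • (X + 1) := by
    rw [add_mul, mul_add, mul_add, hsq, one_mul, mul_one, mul_one]
    module
  have hP : P * P = P := by
    rw [hPdef, smul_mul_smul_comm, hXX, smul_smul]
    congr 1
    field_simp
  have key : pstZ • X = (-pstZ) • (1 : Matrix m m ℂ) + (pstZ * N) • P := by
    rw [hPdef, smul_smul, mul_assoc, mul_inv_cancel₀ hN, mul_one]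
    module
  rw [key, Matrix.exp_add_of_commute _ _
    (((Commute.one_left P).smul_left (-pstZ)).smul_right (pstZ * N)),
    exp_scalar, exp_smul_idem P hP, h4, exp_neg_pstZ, sub_self, zero_smul,
    add_zero, mul_one]

lemma exp_T (X : Matrix m m ℂ) (hsq : X * X = 1) :
    NormedSpace.exp (pstZ • X) = (-Complex.I) • X := by
  set P : Matrix m m ℂ := (2⁻¹ : ℂ) • (1 + X) with hPdef
  have hXX : (1 + X) * (1 + X) = (2 : ℂ) • (1 + X) := by
    rw [add_mul, mul_add, mul_add, hsq, one_mul, one_mul, mul_one]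
    module
  have hP : P * P = P := by
    rw [hPdef, smul_mul_smul_comm, hXX, smul_smul]
    congr 1
    norm_num
  have key : pstZ • X = (-pstZ) • (1 : Matrix m m ℂ) + (2 * pstZ) • P := by
    rw [hPdef, smul_smul]
    have : 2 * pstZ * 2⁻¹ = pstZ := by ring
    rw [this]
    module
  rw [key, Matrix.exp_add_of_commute _ _
    (((Commute.one_left P).smul_left (-pstZ)).smul_right (2 * pstZ)),
    exp_scalar, exp_smul_idem P hP, exp_two_pstZ, exp_neg_pstZ, hPdef]
  rw [smul_mul_assoc, one_mul]
  have : (-1 - 1 : ℂ) = -2 := by norm_num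
  rw [this, smul_smul]
  have h2 : (-2 : ℂ) * 2⁻¹ = -1 := by norm_num
  rw [h2]
  module

lemma of_prod_mul {ι : Type*} [Fintype ι] [DecidableEq ι] {κ : ι → Type*}
    [∀ i, Fintype (κ i)] [∀ i, DecidableEq (κ i)]
    (M N : ∀ i, Matrix (κ i) (κ i) ℂ) :
    (Matrix.of fun u v : ∀ i, κ i => ∏ i, M i (u i) (v i)) *
      (Matrix.of fun u v : ∀ i, κ i => ∏ i, N i (u i) (v i)) =
      Matrix.of fun u v : ∀ i, κ i => ∏ i, (M i * N i) (u i) (v i) := by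
  ext u v
  simp only [Matrix.mul_apply, Matrix.of_apply]
  rw [show (fun w : ∀ i, κ i => (∏ i, M i (u i) (w i)) * ∏ i, N i (w i) (v i)) =
      fun w : ∀ i, κ i => ∏ i, M i (u i) (w i) * N i (w i) (v i) from
    funext fun w => (Finset.prod_mul_distrib).symm]
  rw [← Fintype.prod_sum (fun i x => M i (u i) x * N i x (v i))]

lemma of_prod_one {ι : Type*} [Fintype ι] {κ : ι → Type*}
    [∀ i, Fintype (κ i)] [∀ i, DecidableEq (κ i)] :
    (Matrix.of fun u v : ∀ i, κ i => ∏ i, (1 : Matrix (κ i) (κ i) ℂ) (u i) (v i)) = 1 := by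
  ext u v
  simp only [Matrix.of_apply, Matrix.one_apply]
  rw [show (fun i => if u i = v i then (1 : ℂ) else 0) =
      fun i => if u i = v i then (1 : ℂ) else 0 from rfl]
  rw [Fintype.prod_boole]
  simp [funext_iff]

lemma A2_mul_A2 : A2 * A2 = 1 := by
  ext i j
  have huniv : (Finset.univ : Finset (ZMod 2)) = {0, 1} := by decide
  rw [Matrix.mul_apply, huniv, Finset.sum_insert (by decide), Finset.sum_singleton]
  have hij : ∀ t : ZMod 2, t = 0 ∨ t = 1 := by decide
  rcases hij i with hi | hi <;> rcases hij j with hj | hj <;>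
    subst hi <;> subst hj <;>
    simp [A2, Matrix.one_apply, (by decide : (0 : ZMod 2) ≠ 1),
      (by decide : (1 : ZMod 2) ≠ 0)]

lemma cubeF_mul (x y : ZMod 2) :
    (if x = 1 then A2 else 1) * (if y = 1 then A2 else 1) =
      (if x + y = 1 then A2 else 1) := by
  have hc : ∀ t : ZMod 2, t = 0 ∨ t = 1 := by decide
  rcases hc x with hx | hx <;> rcases hc y with hy | hy <;> subst hx <;> subst hy <;>
    simp [A2_mul_A2, (by decide : (0 : ZMod 2) ≠ 1), (by decide : (0 + 0 : ZMod 2) = 0),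
      (by decide : (0 + 1 : ZMod 2) = 1), (by decide : (1 + 0 : ZMod 2) = 1),
      (by decide : (1 + 1 : ZMod 2) = 0)]

lemma cube_mul {r : ℕ} (a b : Fin r → ZMod 2) : cube a * cube b = cube (a + b) := by
  unfold cube
  rw [of_prod_mul]
  congr 1
  funext u v
  exact Finset.prod_congr rfl fun j _ => by rw [cubeF_mul]; rfl

lemma cube_zero {r : ℕ} : cube (0 : Fin r → ZMod 2) = 1 := by
  unfold cube
  simp only [Pi.zero_apply, if_neg (by decide : ¬(0 : ZMod 2) = 1)]
  exact of_prod_one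

lemma kronC_mul {d : ℕ} {n : Fin d → ℕ} (M N : ∀ i, Matrix (Fin (n i)) (Fin (n i)) ℂ) :
    kronC M * kronC N = kronC fun i => M i * N i :=
  of_prod_mul M N

lemma kronC_one {d : ℕ} {n : Fin d → ℕ} :
    kronC (fun i => (1 : Matrix (Fin (n i)) (Fin (n i)) ℂ)) = 1 :=
  of_prod_one

lemma Kadj_sq (N : ℕ) :
    Kadj N * Kadj N = ((N : ℂ) - 2) • Kadj N + ((N : ℂ) - 1) • 1 := by
  ext i j
  rw [Matrix.mul_apply]
  simp only [Kadj, Matrix.add_apply, Matrix.smul_apply, Matrix.of_apply,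
    Matrix.one_apply, smul_eq_mul]
  by_cases hij : i = j
  · subst hij
    rw [Finset.sum_congr rfl (fun k _ => show
        (if i = k then (0:ℂ) else 1) * (if k = i then 0 else 1) =
          1 - (if i = k then 1 else 0) by
      by_cases h : i = k <;> simp [h, eq_comm, h] )]
    rw [Finset.sum_sub_distrib, Finset.sum_const, Finset.sum_ite_eq]
    simp [Finset.card_univ, mul_comm]
  · rw [Finset.sum_congr rfl (fun k _ => show
        (if i = k then (0:ℂ) else 1) * (if k = j then 0 else 1) =
          1 - (if i = k then 1 else 0) - (if k = j then 1 else 0) by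
      by_cases h1 : i = k <;> by_cases h2 : k = j <;>
        first
          | exact absurd (h1.trans h2) hij
          | simp [h1, h2, hij] )]
    rw [Finset.sum_sub_distrib, Finset.sum_sub_distrib, Finset.sum_const,
      Finset.sum_ite_eq, Finset.sum_ite_eq']
    simp [Finset.card_univ, hij]
    ring

lemma kronK_sq {d : ℕ} {n : Fin d → ℕ} (i : Fin d) :
    (kronC fun i' => if i' = i then Kadj (n i') else 1) *
      (kronC fun i' => if i' = i then Kadj (n i') else 1) =
      ((n i : ℂ) - 2) • (kronC fun i' => if i' = i then Kadj (n i') else 1) +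
        ((n i : ℂ) - 1) • 1 := by
  rw [kronC_mul]
  have hfun : (fun i' => (if i' = i then Kadj (n i') else 1) *
      (if i' = i then Kadj (n i') else 1))
      = fun i' => if i' = i then Kadj (n i') * Kadj (n i') else 1 := by
    funext i'; by_cases h : i' = i <;> simp [h]
  rw [hfun]
  ext u v
  simp only [kronC, Matrix.add_apply, Matrix.smul_apply, Matrix.of_apply, smul_eq_mul]
  set c : ℂ := ∏ i' ∈ Finset.univ.erase i, (if u i' = v i' then (1 : ℂ) else 0) with hc
  have h1 : ∏ i', (if i' = i then Kadj (n i') * Kadj (n i') else 1) (u i') (v i') =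
      (Kadj (n i) * Kadj (n i)) (u i) (v i) * c := by
    rw [← Finset.mul_prod_erase Finset.univ _ (Finset.mem_univ i), if_pos rfl, hc]
    congr 1
    exact Finset.prod_congr rfl fun i' hi' => by
      rw [if_neg (Finset.ne_of_mem_erase hi'), Matrix.one_apply]
  have h2 : ∏ i', (if i' = i then Kadj (n i') else 1) (u i') (v i') =
      Kadj (n i) (u i) (v i) * c := by
    rw [← Finset.mul_prod_erase Finset.univ _ (Finset.mem_univ i), if_pos rfl, hc]
    congr 1
    exact Finset.prod_congr rfl fun i' hi' => by
      rw [if_neg (Finset.ne_of_mem_erase hi'), Matrix.one_apply]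
  have h3 : (1 : Matrix (∀ i', Fin (n i')) (∀ i', Fin (n i')) ℂ) u v =
      (if u i = v i then (1 : ℂ) else 0) * c := by
    rw [Matrix.one_apply]
    have hbool : (if u = v then (1 : ℂ) else 0) =
        ∏ i', (if u i' = v i' then (1 : ℂ) else 0) := by
      rw [Fintype.prod_boole]
      simp [funext_iff]
    rw [hbool, ← Finset.mul_prod_erase Finset.univ _ (Finset.mem_univ i), hc]
  rw [h1, h2, h3]
  have hk : (Kadj (n i) * Kadj (n i)) (u i) (v i) =
      ((n i : ℂ) - 2) * Kadj (n i) (u i) (v i) +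
        ((n i : ℂ) - 1) * (if u i = v i then 1 else 0) := by
    rw [Kadj_sq]
    simp [Matrix.one_apply]
  rw [hk]
  ring

noncomputable def Smat {d r : ℕ} (n : Fin d → ℕ) (i : Fin d) :
    Matrix ((∀ i, Fin (n i)) × (Fin r → ZMod 2)) ((∀ i, Fin (n i)) × (Fin r → ZMod 2)) ℂ :=
  (kronC fun i' => if i' = i then Kadj (n i') else 1) ⊗ₖ
    (1 : Matrix (Fin r → ZMod 2) (Fin r → ZMod 2) ℂ)

def eb {r : ℕ} (j : Fin r) : Fin r → ZMod 2 := fun j' => if j' = j then 1 else 0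

noncomputable def Tmat (d r : ℕ) (n : Fin d → ℕ) (j : Fin r) :
    Matrix ((∀ i, Fin (n i)) × (Fin r → ZMod 2)) ((∀ i, Fin (n i)) × (Fin r → ZMod 2)) ℂ :=
  (1 : Matrix (∀ i, Fin (n i)) (∀ i, Fin (n i)) ℂ) ⊗ₖ cube (eb j)

lemma kronK_comm {d : ℕ} {n : Fin d → ℕ} (i i' : Fin d) :
    Commute (kronC fun i'' => if i'' = i then Kadj (n i'') else 1)
      (kronC fun i'' => if i'' = i' then Kadj (n i'') else 1) := by
  unfold Commute SemiconjBy
  have h : (fun i'' => (if i'' = i then Kadj (n i'') else 1) *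
      (if i'' = i' then Kadj (n i'') else 1)) =
      (fun i'' => (if i'' = i' then Kadj (n i'') else 1) *
      (if i'' = i then Kadj (n i'') else 1)) := by
    funext i''
    by_cases h1 : i'' = i <;> by_cases h2 : i'' = i' <;> simp [h1, h2]
  rw [kronC_mul, kronC_mul, h]

lemma Smat_comm {d r : ℕ} (n : Fin d → ℕ) (i i' : Fin d) :
    Commute (Smat (r := r) n i) (Smat (r := r) n i') := by
  unfold Commute SemiconjBy Smat
  rw [← Matrix.mul_kronecker_mul, ← Matrix.mul_kronecker_mul, one_mul,
    (kronK_comm i i').eq]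

lemma Tmat_comm {d r : ℕ} (n : Fin d → ℕ) (j j' : Fin r) :
    Commute (Tmat d r n j) (Tmat d r n j') := by
  unfold Commute SemiconjBy Tmat
  rw [← Matrix.mul_kronecker_mul, ← Matrix.mul_kronecker_mul, one_mul, cube_mul, cube_mul,
    add_comm (eb j)]

lemma ST_comm {d r : ℕ} (n : Fin d → ℕ) (i : Fin d) (j : Fin r) :
    Commute (Smat (r := r) n i) (Tmat d r n j) := by
  unfold Commute SemiconjBy Smat Tmat
  rw [← Matrix.mul_kronecker_mul, ← Matrix.mul_kronecker_mul, one_mul, mul_one,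
    one_mul, mul_one]

lemma Smat_sq {d r : ℕ} (n : Fin d → ℕ) (i : Fin d) :
    Smat (r := r) n i * Smat (r := r) n i =
      ((n i : ℂ) - 2) • Smat (r := r) n i + ((n i : ℂ) - 1) • 1 := by
  unfold Smat
  rw [← Matrix.mul_kronecker_mul, one_mul, kronK_sq, Matrix.add_kronecker,
    Matrix.smul_kronecker, Matrix.smul_kronecker, Matrix.one_kronecker_one]

lemma Tmat_sq {d r : ℕ} (n : Fin d → ℕ) (j : Fin r) :
    Tmat d r n j * Tmat d r n j = 1 := by
  unfold Tmat
  rw [← Matrix.mul_kronecker_mul, one_mul, cube_mul]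
  have : eb j + eb j = (0 : Fin r → ZMod 2) := by
    funext j'
    show eb j j' + eb j j' = 0
    have : ∀ t : ZMod 2, t + t = 0 := by decide
    exact this _
  rw [this, cube_zero, Matrix.one_kronecker_one]

lemma expSum_S {d r : ℕ} (n : Fin d → ℕ) (hn : ∀ i, 0 < n i) (h4 : ∀ i, 4 ∣ n i)
    (s : Finset (Fin d)) :
    NormedSpace.exp (∑ i ∈ s, pstZ • Smat (r := r) n i) =
      (Complex.I ^ s.card) • 1 := by
  classical
  induction s using Finset.induction_on with
  | empty => simp [exp_zero]
  | @insert a s ha ih =>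
    have comm : Commute (pstZ • Smat (r := r) n a) (∑ i ∈ s, pstZ • Smat (r := r) n i) :=
      Commute.sum_right _ _ _ fun i _ => ((Smat_comm n a i).smul_left pstZ).smul_right pstZ
    rw [Finset.sum_insert ha, Matrix.exp_add_of_commute _ _ comm, ih,
      exp_K (Smat (r := r) n a) (n a) (Nat.cast_ne_zero.mpr (hn a).ne')
        (Smat_sq n a) (exp_pstZ_nat (n a) (h4 a)),
      Finset.card_insert_of_notMem ha, smul_mul_smul_comm, one_mul, ← pow_succ']

lemma expSum_T {d r : ℕ} (n : Fin d → ℕ) (s : Finset (Fin r)) :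
    NormedSpace.exp (∑ j ∈ s, pstZ • Tmat d r n j) =
      ((-Complex.I) ^ s.card) •
        ((1 : Matrix (∀ i, Fin (n i)) (∀ i, Fin (n i)) ℂ) ⊗ₖ cube (∑ j ∈ s, eb j)) := by
  classical
  induction s using Finset.induction_on with
  | empty => simp [exp_zero, cube_zero, Matrix.one_kronecker_one]
  | @insert a s ha ih =>
    have comm : Commute (pstZ • Tmat d r n a) (∑ j ∈ s, pstZ • Tmat d r n j) :=
      Commute.sum_right _ _ _ fun j _ => ((Tmat_comm n a j).smul_left pstZ).smul_right pstZ
    rw [Finset.sum_insert ha, Matrix.exp_add_of_commute _ _ comm, ih,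
      exp_T (Tmat d r n a) (Tmat_sq n a)]
    simp only [Tmat]
    rw [smul_mul_smul_comm, ← Matrix.mul_kronecker_mul, one_mul, cube_mul,
      Finset.card_insert_of_notMem ha, Finset.sum_insert ha, ← pow_succ']

lemma main_exp {d r : ℕ} (hd : 0 < d) (n : Fin d → ℕ) (hn : ∀ i, 0 < n i)
    (h4 : ∀ i, 4 ∣ n i) :
    NormedSpace.exp (pstZ •
        ((∑ i : Fin d, Smat (r := r) n i) + ∑ j : Fin r, Tmat d r n j)) =
      (Complex.I ^ d * (-Complex.I) ^ r) •
        ((1 : Matrix (∀ i, Fin (n i)) (∀ i, Fin (n i)) ℂ) ⊗ₖ cube (fun _ => 1)) := by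
  have commbig : Commute (∑ i : Fin d, pstZ • Smat (r := r) n i)
      (∑ j : Fin r, pstZ • Tmat d r n j) := by
    apply Commute.sum_left
    intro i _
    apply Commute.sum_right
    intro j _
    exact ((ST_comm n i j).smul_left pstZ).smul_right pstZ
  have hsum : (∑ j : Fin r, eb j) = fun _ => (1 : ZMod 2) := by
    funext j'
    rw [Finset.sum_apply]
    simp only [eb]
    rw [Finset.sum_ite_eq]
    simp
  rw [smul_add, Finset.smul_sum, Finset.smul_sum,
    Matrix.exp_add_of_commute _ _ commbig,
    expSum_S n hn h4 Finset.univ, expSum_T n Finset.univ]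
  simp only [Finset.card_univ, Fintype.card_fin]
  rw [smul_mul_smul_comm, one_mul, hsum]


/-- the Hamming graph `H(n_1,…,n_d,2,…,2)` (with `r` twos and
`4 ∣ gcd(n_1,…,n_d)`) satisfies `exp(-i(π/2)B) = γ·(I ⊗ A_{K_2}^{⊗r})` for some
unimodular `γ`; in particular it admits PST at time `π/2` from every vertex `u` to
`u + (0,…,0,1,…,1)`. -/
theorem stmt18 (d r : ℕ) (hd : 0 < d) (hr : 1 ≤ r) (n : Fin d → ℕ) (hn : ∀ i, 3 ≤ n i)
    (h4 : 4 ∣ Finset.univ.gcd n) :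
    ∃ γ : ℂ, ‖γ‖ = 1 ∧
      NormedSpace.exp ((-Complex.I * ((Real.pi / 2 : ℝ) : ℂ)) •
          ((∑ i : Fin d, (kronC fun i' => if i' = i then Kadj (n i') else 1) ⊗ₖ
              (1 : Matrix (Fin r → ZMod 2) (Fin r → ZMod 2) ℂ)) +
           ∑ j : Fin r, (1 : Matrix (∀ i, Fin (n i)) (∀ i, Fin (n i)) ℂ) ⊗ₖ
              cube (fun j' => if j' = j then 1 else 0))) =
        γ • ((1 : Matrix (∀ i, Fin (n i)) (∀ i, Fin (n i)) ℂ) ⊗ₖ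
          cube (fun _ => 1)) ∧
      ∀ (x : ∀ i, Fin (n i)) (u : Fin r → ZMod 2),
        (x, u) ≠ (x, u + fun _ => 1) ∧
        ‖((NormedSpace.exp ((-Complex.I * ((Real.pi / 2 : ℝ) : ℂ)) •
          ((∑ i : Fin d, (kronC fun i' => if i' = i then Kadj (n i') else 1) ⊗ₖ
              (1 : Matrix (Fin r → ZMod 2) (Fin r → ZMod 2) ℂ)) +
           ∑ j : Fin r, (1 : Matrix (∀ i, Fin (n i)) (∀ i, Fin (n i)) ℂ) ⊗ₖ
              cube (fun j' => if j' = j then 1 else 0))))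
          (x, u) (x, u + fun _ => 1))‖ = 1 := by
  have hn' : ∀ i, 0 < n i := fun i => lt_of_lt_of_le (by norm_num) (hn i)
  have h4' : ∀ i, 4 ∣ n i := fun i =>
    dvd_trans h4 (Finset.gcd_dvd (Finset.mem_univ i))
  set γ : ℂ := Complex.I ^ d * (-Complex.I) ^ r with hγ
  have heq : NormedSpace.exp ((-Complex.I * ((Real.pi / 2 : ℝ) : ℂ)) •
          ((∑ i : Fin d, (kronC fun i' => if i' = i then Kadj (n i') else 1) ⊗ₖ
              (1 : Matrix (Fin r → ZMod 2) (Fin r → ZMod 2) ℂ)) +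
           ∑ j : Fin r, (1 : Matrix (∀ i, Fin (n i)) (∀ i, Fin (n i)) ℂ) ⊗ₖ
              cube (fun j' => if j' = j then 1 else 0))) =
        γ • ((1 : Matrix (∀ i, Fin (n i)) (∀ i, Fin (n i)) ℂ) ⊗ₖ
          cube (fun _ => 1)) := main_exp hd n hn' h4'
  have habs : ‖γ‖ = 1 := by
    rw [hγ]
    simp [norm_mul, norm_pow, Complex.norm_I]
  refine ⟨γ, habs, heq, fun x u => ⟨?_, ?_⟩⟩
  · intro hcontra
    have h2 : u = u + fun _ => (1 : ZMod 2) := congrArg Prod.snd hcontra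
    have h3 := congrFun h2 ⟨0, hr⟩
    have h5 : ∀ t : ZMod 2, ¬(t = t + 1) := by decide
    exact h5 (u ⟨0, hr⟩) (by simpa using h3)
  · rw [heq]
    have hne : ∀ t : ZMod 2, ¬(t = t + 1) := by decide
    have hA2 : ∀ j : Fin r, A2 (u j) (u j + 1) = 1 := by
      intro j
      simp [A2, hne (u j)]
    have hcube : cube (fun _ => (1 : ZMod 2)) u (u + fun _ => 1) = 1 := by
      have h9 : cube (fun _ => (1 : ZMod 2)) u (u + fun _ => 1) =
          ∏ j : Fin r, A2 (u j) (u j + 1) := by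
        simp [cube]
      rw [h9]
      simp [hA2]
    rw [Matrix.smul_apply, Matrix.kroneckerMap_apply]
    rw [Matrix.one_apply_eq, hcube, one_mul, smul_eq_mul, mul_one, habs]
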